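/- The map μ₀ : D_{n+1} → ℂⁿ × ℝ given by μ₀(z) = (4iz', 1) is equivariant for the Heisenberg action on D_{n+1} and the representation ρ(w',t)(z',s) = (z' + 4is·w', s): that is, μ₀((w',t)·z) = ρ(w',t)(μ₀(z)) for all (w',t) ∈ ℍₙ, z ∈ D_{n+1}. Consequently the moment map μ(z) = −(4iz',1) / (2(Im(z_{n+1}) − |z'|²)) is ρ-equivariant. -/

import Mathlib

/-- The Heisenberg action of `ℍₙ` on `ℂ^{n+1} = ℂⁿ × ℂ`. -/
noncomputable def hact {n : ℕ} (h : (Fin n → ℂ) × ℝ) (z : (Fin n → ℂ) × ℂ) :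
    (Fin n → ℂ) × ℂ :=
  (z.1 + h.1,
    z.2 + (h.2 : ℂ) + 2 * Complex.I * (∑ j, z.1 j * (starRingEnd ℂ) (h.1 j))
      + Complex.I * ((∑ j, Complex.normSq (h.1 j) : ℝ) : ℂ))

/-- The Siegel domain `D_{n+1} ⊆ ℂⁿ × ℂ`. -/
def siegel (n : ℕ) : Set ((Fin n → ℂ) × ℂ) :=
  {z | (∑ j, Complex.normSq (z.1 j)) < z.2.im}

/-- The representation `ρ(w',t)(z',s) = (z' + 4is·w', s)` on `ℂⁿ × ℝ`. -/
noncomputable def hRho {n : ℕ} (h : (Fin n → ℂ) × ℝ) (X : (Fin n → ℂ) × ℝ) :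
    (Fin n → ℂ) × ℝ :=
  (fun j => X.1 j + 4 * X.2 * Complex.I * h.1 j, X.2)

/-- `μ₀(z) = (4iz', 1)`. -/
noncomputable def mu0 {n : ℕ} (z : (Fin n → ℂ) × ℂ) : (Fin n → ℂ) × ℝ :=
  (fun j => 4 * Complex.I * z.1 j, (1 : ℝ))

/-- The moment map `μ(z) = −(4iz',1) / (2(Im(z_{n+1}) − |z'|²))`. -/
noncomputable def muH {n : ℕ} (z : (Fin n → ℂ) × ℂ) : (Fin n → ℂ) × ℝ :=
  (fun j => -(4 * Complex.I * z.1 j) /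
      ((2 * (z.2.im - ∑ k, Complex.normSq (z.1 k)) : ℝ) : ℂ),
    -(1 : ℝ) / (2 * (z.2.im - ∑ k, Complex.normSq (z.1 k))))

lemma hact_inv {n : ℕ} (h : (Fin n → ℂ) × ℝ) (z : (Fin n → ℂ) × ℂ) :
    (hact h z).2.im - ∑ k, Complex.normSq ((hact h z).1 k)
      = z.2.im - ∑ k, Complex.normSq (z.1 k) := by
  simp only [hact, Complex.add_im, Complex.ofReal_im, Complex.mul_im,
    Complex.I_re, Complex.I_im, Complex.ofReal_re, Pi.add_apply]
  have h1 : ∀ k, Complex.normSq (z.1 k + h.1 k)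
      = Complex.normSq (z.1 k) + Complex.normSq (h.1 k)
        + (z.1 k * (starRingEnd ℂ) (h.1 k)).re * 2 := by
    intro k
    have := Complex.normSq_add (z.1 k) (h.1 k)
    simpa [mul_comm] using this
  rw [Finset.sum_congr rfl (fun k _ => h1 k)]
  have h2 : (2 * Complex.I * ∑ j, z.1 j * (starRingEnd ℂ) (h.1 j)).im
      = 2 * (∑ j, z.1 j * (starRingEnd ℂ) (h.1 j)).re := by
    simp [Complex.mul_im, Complex.mul_re]
  rw [Finset.sum_add_distrib, Finset.sum_add_distrib, ← Finset.sum_mul,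
    ← Complex.re_sum]
  ring_nf
  simp [Complex.mul_im]
  ring

/-- `μ₀` is `ρ`-equivariant for the Heisenberg action on the Siegel domain, and
consequently so is the moment map `μ`. -/
theorem heisenberg_moment_map_equivariance (n : ℕ) :
    (∀ (h : (Fin n → ℂ) × ℝ), ∀ z ∈ siegel n, mu0 (hact h z) = hRho h (mu0 z)) ∧
    (∀ (h : (Fin n → ℂ) × ℝ), ∀ z ∈ siegel n, muH (hact h z) = hRho h (muH z)) := by
  constructor
  · intro h z _
    refine Prod.ext (funext fun j => ?_) rfl
    simp only [mu0, hact, hRho, Pi.add_apply]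
    push_cast
    ring
  · intro h z hz
    have hd : (0:ℝ) < z.2.im - ∑ k, Complex.normSq (z.1 k) := by
      simpa [sub_pos, siegel] using hz
    have hd2 : (2 * (z.2.im - ∑ k, Complex.normSq (z.1 k)) : ℝ) ≠ 0 := by positivity
    have hd2c : ((2 * (z.2.im - ∑ k, Complex.normSq (z.1 k)) : ℝ) : ℂ) ≠ 0 :=
      Complex.ofReal_ne_zero.mpr hd2
    have hfst : (hact h z).1 = z.1 + h.1 := rfl
    refine Prod.ext (funext fun j => ?_) ?_
    · simp only [muH, hRho]
      rw [hact_inv, hfst]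
      simp only [Pi.add_apply]
      push_cast
      field_simp
      ring
    · simp only [muH, hRho, hact_inv]
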